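/- Let T be a bounded expansive operator on a Hilbert space H with Cauchy dual T' = T(T*T)^{-1}. If g ∈ H and λ ∈ ℂ with |λ| = 1 satisfy T'g = λg, then Tg = λg. -/

import Mathlib

open ContinuousLinearMap
open scoped ComplexInnerProductSpace

theorem stmt_4 {H : Type*} [NormedAddCommGroup H] [InnerProductSpace ℂ H]
    [CompleteSpace H] (T : H →L[ℂ] H)
    (hexp : ∀ x : H, ‖x‖ ≤ ‖T x‖)
    (S : H →L[ℂ] H)
    (hS₁ : (adjoint T ∘L T) ∘L S = 1) (hS₂ : S ∘L (adjoint T ∘L T) = 1)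
    (g : H) (lam : ℂ) (hlam : ‖lam‖ = 1)
    (hg : (T ∘L S) g = lam • g) : T g = lam • g := by
  have hll : (starRingEnd ℂ) lam * lam = 1 := by
    have := Complex.normSq_eq_conj_mul_self (z := lam)
    rw [← this]
    simp [Complex.normSq_eq_norm_sq, hlam]
  -- S is self-adjoint
  have hSadj : adjoint S = S := by
    have h1 : (adjoint T ∘L T) ∘L adjoint S = 1 := by
      have := congrArg adjoint hS₂
      simpa [adjoint_comp, adjoint_adjoint, comp_assoc, one_def, adjoint_id] using this
    calc adjoint S = (S ∘L (adjoint T ∘L T)) ∘L adjoint S := by rw [hS₂, one_def, id_comp]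
    _ = S ∘L ((adjoint T ∘L T) ∘L adjoint S) := by rw [comp_assoc]
    _ = S := by rw [h1, one_def, comp_id]
  -- pointwise inverse facts
  have hS₁' : ∀ x, adjoint T (T (S x)) = x := fun x => congrFun (congrArg DFunLike.coe hS₁) x
  -- contraction
  have hcontr : ∀ x, ‖(T ∘L S) x‖ ≤ ‖x‖ := by
    intro x
    have hin : (inner ℂ ((T ∘L S) x) ((T ∘L S) x) : ℂ) = (inner ℂ (S x) x : ℂ) := by
      have h := (adjoint_inner_right T (S x) (T (S x))).symm
      rw [hS₁' x] at h
      simpa using h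
    have h2 : (‖(T ∘L S) x‖ : ℝ) ^ 2 = RCLike.re (inner ℂ (S x) x : ℂ) := by
      rw [← hin]
      exact (inner_self_eq_norm_sq (𝕜 := ℂ) ((T ∘L S) x)).symm
    have h3 : RCLike.re (inner ℂ (S x) x : ℂ) ≤ ‖S x‖ * ‖x‖ := by
      calc RCLike.re (inner ℂ (S x) x : ℂ) ≤ ‖(inner ℂ (S x) x : ℂ)‖ := RCLike.re_le_norm _
      _ ≤ ‖S x‖ * ‖x‖ := norm_inner_le_norm _ _
    have h4 : ‖S x‖ ≤ ‖(T ∘L S) x‖ := by simpa using hexp (S x)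
    have h5 : ‖(T ∘L S) x‖ ^ 2 ≤ ‖(T ∘L S) x‖ * ‖x‖ := by
      rw [h2]
      exact h3.trans (mul_le_mul_of_nonneg_right h4 (norm_nonneg x))
    rcases (norm_nonneg ((T ∘L S) x)).lt_or_eq with h | h
    · have := (mul_le_mul_iff_right₀ h).mp (by nlinarith : ‖(T ∘L S) x‖ * ‖(T ∘L S) x‖ ≤ ‖(T ∘L S) x‖ * ‖x‖)
      exact this
    · rw [← h]; exact norm_nonneg x
  have hCnorm : ‖T ∘L S‖ ≤ 1 := opNorm_le_bound _ zero_le_one (by simpa using hcontr)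
  set A := adjoint (T ∘L S) with hAdef
  have hAg : ‖A g‖ ≤ ‖g‖ := by
    calc ‖A g‖ ≤ ‖A‖ * ‖g‖ := le_opNorm _ _
    _ ≤ 1 * ‖g‖ := by
        apply mul_le_mul_of_nonneg_right _ (norm_nonneg g)
        rw [hAdef]
        calc ‖adjoint (T ∘L S)‖ = ‖T ∘L S‖ := LinearIsometryEquiv.norm_map adjoint _
        _ ≤ 1 := hCnorm
    _ = ‖g‖ := one_mul _
  have hinner : (inner ℂ (lam • A g) g : ℂ) = (‖g‖ : ℂ) ^ 2 := by
    rw [inner_smul_left, adjoint_inner_left, hg, inner_smul_right, inner_self_eq_norm_sq_to_K]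
    rw [← mul_assoc, hll, one_mul]
    norm_cast
  have hfix : lam • A g = g := by
    have hsq : ‖lam • A g - g‖ ^ 2 ≤ 0 := by
      have hns := @norm_sub_sq ℂ _ _ _ _ (lam • A g) g
      rw [hns, hinner]
      have : ‖lam • A g‖ = ‖A g‖ := by rw [norm_smul, hlam, one_mul]
      rw [this]
      have : RCLike.re ((‖g‖ : ℂ) ^ 2) = ‖g‖ ^ 2 := by
        norm_cast
      rw [this]
      nlinarith [hAg, norm_nonneg g, norm_nonneg (A g), mul_self_le_mul_self (norm_nonneg (A g)) hAg]
    have h0 : ‖lam • A g - g‖ ^ 2 = 0 := le_antisymm hsq (sq_nonneg _)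
    have h1 := pow_eq_zero_iff (two_ne_zero) |>.mp h0
    exact sub_eq_zero.mp (norm_eq_zero.mp h1)
  -- hence lam • S (adjoint T g) = g
  have hfix' : lam • S (adjoint T g) = g := by
    have : A g = S (adjoint T g) := by
      rw [hAdef, adjoint_comp, hSadj]; rfl
    rw [← this]; exact hfix
  -- apply T*T
  have hTTg : adjoint T (T g) = lam • adjoint T g := by
    have := congrArg (fun y => adjoint T (T y)) hfix'
    simp only [map_smul] at this
    rw [hS₁' (adjoint T g)] at this
    -- this : lam • adjoint T g = adjoint T (T g)
    exact this.symm
  set u := lam • g - T g with hudef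
  have hu1 : u = T (S g - g) := by
    have : T (S g) = lam • g := hg
    rw [hudef, map_sub, this]
  have hu2 : adjoint T u = 0 := by
    rw [hudef, map_sub, map_smul, hTTg]
    simp
  have huz : u = 0 := by
    have : (inner ℂ u u : ℂ) = 0 := by
      nth_rewrite 1 [hu1]
      rw [← adjoint_inner_right, hu2, inner_zero_right]
    exact inner_self_eq_zero.mp this
  rw [hudef, sub_eq_zero] at huz
  exact huz.symm
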